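/- Assume the anisotropic ADMM scheme. Then for every k ≥ 0, (1/2)‖Au^k − g‖² ≤ (1/2)‖Au^0 − g‖² + 2μNk. -/

import Mathlib

open Matrix Filter Topology

/-- Euclidean norm of a vector in `ℝ^n`. -/
noncomputable def enorm {n : ℕ} (v : Fin n → ℝ) : ℝ :=
  Real.sqrt (∑ i, (v i) ^ 2)

/-- ℓ⁰ "norm": number of nonzero entries of a vector. -/
noncomputable def l0 {n : ℕ} (v : Fin n → ℝ) : ℕ :=
  (Finset.univ.filter fun i => v i ≠ 0).card

/-- Isotropic ℓ⁰ count: number of indices where the pair of entries is nonzero. -/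
noncomputable def l02 {n : ℕ} (zh zv : Fin n → ℝ) : ℕ :=
  (Finset.univ.filter fun i => zh i ≠ 0 ∨ zv i ≠ 0).card


lemma enorm_nonneg {n : ℕ} (v : Fin n → ℝ) : 0 ≤ _root_.enorm v := Real.sqrt_nonneg _

lemma enorm_zero' {n : ℕ} : _root_.enorm (0 : Fin n → ℝ) = 0 := by
  simp [_root_.enorm]

lemma enorm_sub_comm {n : ℕ} (a b : Fin n → ℝ) : _root_.enorm (a - b) = _root_.enorm (b - a) := by
  unfold _root_.enorm
  congr 1
  exact Finset.sum_congr rfl fun i _ => by simp [Pi.sub_apply]; ring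

lemma l0_le {n : ℕ} (v : Fin n → ℝ) : l0 v ≤ n := by
  have := Finset.card_filter_le (Finset.univ : Finset (Fin n)) (fun i => v i ≠ 0)
  simpa [l0] using this

/-- linear-in-k bound on the data fidelity along the anisotropic
ADMM iterates. -/
theorem anisotropic_ADMM_fidelity_growth (M N : ℕ) (A : Matrix (Fin M) (Fin N) ℝ)
    (Dh Dv : Matrix (Fin N) (Fin N) ℝ) (g : Fin M → ℝ) (μ : ℝ) (hμ : 0 < μ)
    (t s u lt ls : ℕ → Fin N → ℝ) (βt βs : ℕ → ℝ)
    (hβt : ∀ k, 0 < βt k) (hβs : ∀ k, 0 < βs k)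
    -- (i): t^{k+1} minimizes the anisotropic ℓ⁰ subproblem
    (ht : ∀ k, ∀ t' : Fin N → ℝ,
      μ * (l0 (t (k + 1)) : ℝ)
          + βt k / 2 * _root_.enorm (t (k + 1) - (Dh.mulVec (u k) + (βt k)⁻¹ • lt k)) ^ 2
        ≤ μ * (l0 t' : ℝ)
          + βt k / 2 * _root_.enorm (t' - (Dh.mulVec (u k) + (βt k)⁻¹ • lt k)) ^ 2)
    -- (ii): s^{k+1} minimizes the anisotropic ℓ⁰ subproblem
    (hs : ∀ k, ∀ s' : Fin N → ℝ,
      μ * (l0 (s (k + 1)) : ℝ)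
          + βs k / 2 * _root_.enorm (s (k + 1) - (Dv.mulVec (u k) + (βs k)⁻¹ • ls k)) ^ 2
        ≤ μ * (l0 s' : ℝ)
          + βs k / 2 * _root_.enorm (s' - (Dv.mulVec (u k) + (βs k)⁻¹ • ls k)) ^ 2)
    -- (iii): u^{k+1} minimizes the quadratic subproblem
    (hu : ∀ k, ∀ v : Fin N → ℝ,
      1 / 2 * _root_.enorm (A.mulVec (u (k + 1)) - g) ^ 2
          + βt k / 2 * _root_.enorm (Dh.mulVec (u (k + 1)) - (t (k + 1) - (βt k)⁻¹ • lt k)) ^ 2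
          + βs k / 2 * _root_.enorm (Dv.mulVec (u (k + 1)) - (s (k + 1) - (βs k)⁻¹ • ls k)) ^ 2
        ≤ 1 / 2 * _root_.enorm (A.mulVec v - g) ^ 2
          + βt k / 2 * _root_.enorm (Dh.mulVec v - (t (k + 1) - (βt k)⁻¹ • lt k)) ^ 2
          + βs k / 2 * _root_.enorm (Dv.mulVec v - (s (k + 1) - (βs k)⁻¹ • ls k)) ^ 2)
    -- (iv): dual updates
    (hlt : ∀ k, lt (k + 1) = lt k - βt k • (t (k + 1) - Dh.mulVec (u (k + 1))))
    (hls : ∀ k, ls (k + 1) = ls k - βs k • (s (k + 1) - Dv.mulVec (u (k + 1))))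
    : ∀ k : ℕ,
      1 / 2 * _root_.enorm (A.mulVec (u k) - g) ^ 2
        ≤ 1 / 2 * _root_.enorm (A.mulVec (u 0) - g) ^ 2 + 2 * μ * N * k := by
  
  have step : ∀ k : ℕ,
      1 / 2 * _root_.enorm (A.mulVec (u (k + 1)) - g) ^ 2
        ≤ 1 / 2 * _root_.enorm (A.mulVec (u k) - g) ^ 2 + 2 * μ * N := by
    intro k
    set ct := Dh.mulVec (u k) + (βt k)⁻¹ • lt k with hct
    set cs := Dv.mulVec (u k) + (βs k)⁻¹ • ls k with hcs
    have h1 := ht k ct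
    have h2 := hs k cs
    rw [sub_self, enorm_zero'] at h1 h2
    have hl0t : (0:ℝ) ≤ μ * (l0 (t (k+1)) : ℝ) := by positivity
    have hl0s : (0:ℝ) ≤ μ * (l0 (s (k+1)) : ℝ) := by positivity
    have hctN : μ * (l0 ct : ℝ) ≤ μ * N :=
      mul_le_mul_of_nonneg_left (by exact_mod_cast l0_le ct) hμ.le
    have hcsN : μ * (l0 cs : ℝ) ≤ μ * N :=
      mul_le_mul_of_nonneg_left (by exact_mod_cast l0_le cs) hμ.le
    have hEt : βt k / 2 * _root_.enorm (t (k + 1) - ct) ^ 2 ≤ μ * N := by nlinarith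
    have hEs : βs k / 2 * _root_.enorm (s (k + 1) - cs) ^ 2 ≤ μ * N := by nlinarith
    have h3 := hu k (u k)
    have e1 : Dh.mulVec (u k) - (t (k + 1) - (βt k)⁻¹ • lt k) = ct - t (k + 1) := by
      rw [hct]; abel
    have e2 : Dv.mulVec (u k) - (s (k + 1) - (βs k)⁻¹ • ls k) = cs - s (k + 1) := by
      rw [hcs]; abel
    rw [e1, e2, enorm_sub_comm ct, enorm_sub_comm cs] at h3
    have n1 : 0 ≤ βt k / 2 * _root_.enorm (Dh.mulVec (u (k + 1)) - (t (k + 1) - (βt k)⁻¹ • lt k)) ^ 2 := by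
      have := hβt k; positivity
    have n2 : 0 ≤ βs k / 2 * _root_.enorm (Dv.mulVec (u (k + 1)) - (s (k + 1) - (βs k)⁻¹ • ls k)) ^ 2 := by
      have := hβs k; positivity
    linarith
  intro k
  induction k with
  | zero => simp
  | succ k ih =>
    have := step k
    push_cast
    push_cast at ih
    linarith
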